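/- Let l > 0, λ > 0 and Λ ≥ 0 be real numbers. For every μ > l·(Λ+λ), the second derivative of the function μ ↦ S(μ, Λ) = l·μ / ((μ − l·Λ)·(μ − l·(Λ+λ))) at μ is strictly positive. -/

import Mathlib

/-- The second derivative of `μ ↦ l·μ / ((μ − l·Λ)·(μ − l·(Λ+λ)))` is strictly positive
at every point of the stability region `μ > l·(Λ+λ)`. -/
theorem sojourn_second_deriv_mu_pos (l lam Lam : ℝ) (hl : 0 < l) (hlam : 0 < lam)
    (hLam : 0 ≤ Lam) (μ : ℝ) (hμ : l * (Lam + lam) < μ) :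
    0 < deriv (deriv (fun μ : ℝ => l * μ / ((μ - l * Lam) * (μ - l * (Lam + lam))))) μ := by
  set a := l * Lam with ha_def
  set b := l * (Lam + lam) with hb_def
  have ha : 0 ≤ a := mul_nonneg hl.le hLam
  have hb0 : 0 < b := mul_pos hl (by linarith)
  have hab : a < b := by
    have h : Lam < Lam + lam := by linarith
    exact mul_lt_mul_of_pos_left h hl
  have hbμ : b < μ := hμ
  have hg : ∀ x : ℝ, b < x →
      HasDerivAt (fun x : ℝ => l * x / ((x - a) * (x - b)))
        (l * (a * b - x ^ 2) / ((x - a) ^ 2 * (x - b) ^ 2)) x := by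
    intro x hx
    have hxa : x - a ≠ 0 := by nlinarith
    have hxb : x - b ≠ 0 := by nlinarith
    have hnum : HasDerivAt (fun x : ℝ => l * x) l x := by
      simpa using (hasDerivAt_id x).const_mul l
    have hden : HasDerivAt (fun x : ℝ => (x - a) * (x - b)) ((x - b) + (x - a)) x := by
      have h1 : HasDerivAt (fun x : ℝ => x - a) 1 x := (hasDerivAt_id x).sub_const a
      have h2 : HasDerivAt (fun x : ℝ => x - b) 1 x := (hasDerivAt_id x).sub_const b
      simpa [mul_comm] using (show HasDerivAt (fun y : ℝ => (y - a) * (y - b)) _ x from h1.mul h2)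
    have hd := (show
      HasDerivAt (fun y : ℝ => l * y / ((y - a) * (y - b))) _ x from hnum.div hden (mul_ne_zero hxa hxb))
    convert hd using 1
    field_simp
    ring
  have hev : deriv (fun x : ℝ => l * x / ((x - a) * (x - b)))
      =ᶠ[nhds μ] (fun x : ℝ => l * (a * b - x ^ 2) / ((x - a) ^ 2 * (x - b) ^ 2)) := by
    filter_upwards [eventually_gt_nhds hbμ] with x hx
    exact (hg x hx).deriv
  rw [hev.deriv_eq]
  have hxa : (0:ℝ) < μ - a := by linarith
  have hxb : (0:ℝ) < μ - b := by linarith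
  have hden : HasDerivAt (fun x : ℝ => (x - a) ^ 2 * (x - b) ^ 2)
      (2 * (μ - a) * (μ - b) ^ 2 + (μ - a) ^ 2 * (2 * (μ - b))) μ := by
    have h1 : HasDerivAt (fun x : ℝ => (x - a) ^ 2) (2 * (μ - a)) μ := by
      simpa using (show HasDerivAt (fun y : ℝ => (y - a) ^ 2) _ μ from ((hasDerivAt_id μ).sub_const a).pow 2)
    have h2 : HasDerivAt (fun x : ℝ => (x - b) ^ 2) (2 * (μ - b)) μ := by
      simpa using (show HasDerivAt (fun y : ℝ => (y - b) ^ 2) _ μ from ((hasDerivAt_id μ).sub_const b).pow 2)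
    exact h1.mul h2
  have hnum : HasDerivAt (fun x : ℝ => l * (a * b - x ^ 2)) (l * (-(2 * μ))) μ := by
    have h : HasDerivAt (fun x : ℝ => a * b - x ^ 2) (-(2 * μ)) μ := by
      simpa using (show
        HasDerivAt (fun y : ℝ => a * b - y ^ 2) _ μ from (hasDerivAt_const μ (a*b)).sub ((hasDerivAt_id μ).pow 2))
    simpa using h.const_mul l
  have hdne : ((μ - a) ^ 2 * (μ - b) ^ 2) ≠ 0 :=
    mul_ne_zero (pow_ne_zero _ hxa.ne') (pow_ne_zero _ hxb.ne')
  have hG := (show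
    HasDerivAt (fun y : ℝ => l * (a * b - y ^ 2) / ((y - a) ^ 2 * (y - b) ^ 2)) _ μ from hnum.div hden hdne)
  rw [hG.deriv]
  apply div_pos
  · have hB : 0 < μ ^ 3 - 3 * a * b * μ + a * b * (a + b) := by
      nlinarith [mul_pos hb0 (pow_pos hxa 3), mul_pos (sub_pos.2 hab) (pow_pos hxb 3),
        mul_nonneg ha (pow_pos hxb 3).le,
        pow_le_pow_left₀ hxb.le (by linarith : μ - b ≤ μ - a) 3]
    nlinarith [mul_pos (mul_pos (mul_pos hl (mul_pos hxa hxb)) hB) (by norm_num : (0:ℝ) < 2)]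
  · positivity
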